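/- Let q be a power of an odd prime and let H be the group of pairs (A, B) ∈ GL_2(F_q) × GL_2(F_q) satisfying det(A)·det(B) = 1, with componentwise multiplication. If (A, B) ∈ H is unipotent, i.e., (A − I)² = 0 and (B − I)² = 0, then (A, B) is conjugate in H to (A², B²): there exists (X, Y) ∈ H with X A X⁻¹ = A² and Y B Y⁻¹ = B². -/

import Mathlib

open Matrix

/-- If `N` is a nonzero 2×2 matrix with `N * N = 0` and `t ≠ 0`, there is an invertible `X`
with `X N = 2 N X` and `det X = 2 t²`. -/
lemma key_conj {F : Type} [Field F] (h2 : (2 : F) ≠ 0)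
    (N : Matrix (Fin 2) (Fin 2) F) (hN2 : N * N = 0) (hN : N ≠ 0)
    (t : F) (ht : t ≠ 0) :
    ∃ X : (Matrix (Fin 2) (Fin 2) F)ˣ,
      (X : Matrix (Fin 2) (Fin 2) F) * N
        = N * (X : Matrix (Fin 2) (Fin 2) F) + N * (X : Matrix (Fin 2) (Fin 2) F) ∧
      (X : Matrix (Fin 2) (Fin 2) F).det = 2 * t ^ 2 := by
  have e00 : N 0 0 * N 0 0 + N 0 1 * N 1 0 = 0 := by
    have := congrFun (congrFun hN2 0) 0
    simpa [Matrix.mul_apply, Fin.sum_univ_two] using this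
  have e01 : N 0 0 * N 0 1 + N 0 1 * N 1 1 = 0 := by
    have := congrFun (congrFun hN2 0) 1
    simpa [Matrix.mul_apply, Fin.sum_univ_two] using this
  have e10 : N 1 0 * N 0 0 + N 1 1 * N 1 0 = 0 := by
    have := congrFun (congrFun hN2 1) 0
    simpa [Matrix.mul_apply, Fin.sum_univ_two] using this
  have e11 : N 1 0 * N 0 1 + N 1 1 * N 1 1 = 0 := by
    have := congrFun (congrFun hN2 1) 1
    simpa [Matrix.mul_apply, Fin.sum_univ_two] using this
  have hd : N 1 1 = - N 0 0 := by
    rcases eq_or_ne (N 0 0 + N 1 1) 0 with htr | htr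
    · linear_combination htr
    · exfalso
      have hb0 : N 0 1 = 0 := by
        have : N 0 1 * (N 0 0 + N 1 1) = 0 := by linear_combination e01
        rcases mul_eq_zero.mp this with h | h
        · exact h
        · exact absurd h htr
      have hc0 : N 1 0 = 0 := by
        have : N 1 0 * (N 0 0 + N 1 1) = 0 := by linear_combination e10
        rcases mul_eq_zero.mp this with h | h
        · exact h
        · exact absurd h htr
      have ha0 : N 0 0 = 0 := by
        have : N 0 0 * N 0 0 = 0 := by linear_combination e00 - N 1 0 * hb0
        exact (mul_self_eq_zero).mp this
      have hd0 : N 1 1 = 0 := by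
        have : N 1 1 * N 1 1 = 0 := by linear_combination e11 - N 0 1 * hc0
        exact (mul_self_eq_zero).mp this
      rw [ha0, hd0] at htr; simp at htr
  have hbc : N 0 1 ≠ 0 ∨ N 1 0 ≠ 0 := by
    by_contra h
    push_neg at h
    obtain ⟨hb0, hc0⟩ := h
    have ha0 : N 0 0 = 0 := by
      have : N 0 0 * N 0 0 = 0 := by linear_combination e00 - N 1 0 * hb0
      exact (mul_self_eq_zero).mp this
    apply hN
    ext i j
    fin_cases i <;> fin_cases j <;>
      simp [ha0, hb0, hc0, hd, Matrix.zero_apply]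
  rcases hbc with hb | hc
  · -- N 0 1 ≠ 0
    have hcval : N 1 0 = -(N 0 0 * N 0 0) / N 0 1 := by
      field_simp
      linear_combination e00
    refine ⟨⟨!![2*t, 0; -(N 0 0 * t)/N 0 1, t],
             !![(2*t)⁻¹, 0; N 0 0/(2*t*N 0 1), t⁻¹], ?_, ?_⟩, ?_, ?_⟩
    · ext i j
      fin_cases i <;> fin_cases j <;>
        (try simp [Matrix.mul_apply, Fin.sum_univ_two]) <;>
        first | ring1 | (field_simp; try ring1)
    · ext i j
      fin_cases i <;> fin_cases j <;>
        (try simp [Matrix.mul_apply, Fin.sum_univ_two]) <;>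
        first | ring1 | (field_simp; try ring1)
    · ext i j
      fin_cases i <;> fin_cases j <;>
        (try simp [Matrix.mul_apply, Matrix.add_apply, Fin.sum_univ_two, hcval, hd]) <;>
        first | ring1 | (field_simp; try ring1)
    · simp only [Units.val_mk]
      rw [Matrix.det_fin_two]
      simp
      ring
  · -- N 1 0 ≠ 0
    have hbval : N 0 1 = -(N 0 0 * N 0 0) / N 1 0 := by
      field_simp
      linear_combination e00
    refine ⟨⟨!![t, (N 0 0 * t)/N 1 0; 0, 2*t],
             !![t⁻¹, -(N 0 0)/(2*t*N 1 0); 0, (2*t)⁻¹], ?_, ?_⟩, ?_, ?_⟩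
    · ext i j
      fin_cases i <;> fin_cases j <;>
        (try simp [Matrix.mul_apply, Fin.sum_univ_two]) <;>
        first | ring1 | (field_simp; try ring1)
    · ext i j
      fin_cases i <;> fin_cases j <;>
        (try simp [Matrix.mul_apply, Fin.sum_univ_two]) <;>
        first | ring1 | (field_simp; try ring1)
    · ext i j
      fin_cases i <;> fin_cases j <;>
        (try simp [Matrix.mul_apply, Matrix.add_apply, Fin.sum_univ_two, hbval, hd]) <;>
        first | ring1 | (field_simp; try ring1)
    · simp only [Units.val_mk]
      rw [Matrix.det_fin_two]
      simp
      ring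

/-- From the commutation relation `X (A-1) = 2 (A-1) X` and unipotency, conjugation gives the
square. -/
lemma conj_step {F : Type} [Field F] (A : Matrix.GeneralLinearGroup (Fin 2) F)
    (X : (Matrix (Fin 2) (Fin 2) F)ˣ)
    (hA : ((A : Matrix (Fin 2) (Fin 2) F) - 1) * ((A : Matrix (Fin 2) (Fin 2) F) - 1) = 0)
    (hX : (X : Matrix (Fin 2) (Fin 2) F) * ((A : Matrix (Fin 2) (Fin 2) F) - 1)
        = ((A : Matrix (Fin 2) (Fin 2) F) - 1) * X + ((A : Matrix (Fin 2) (Fin 2) F) - 1) * X) :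
    X * A * X⁻¹ = A ^ 2 := by
  rw [mul_inv_eq_iff_eq_mul]
  refine Units.ext ?_
  have g : (X : Matrix (Fin 2) (Fin 2) F) * (A : Matrix (Fin 2) (Fin 2) F)
      - (A : Matrix (Fin 2) (Fin 2) F) * (A : Matrix (Fin 2) (Fin 2) F) * X
      = ((X : Matrix (Fin 2) (Fin 2) F) * ((A : Matrix (Fin 2) (Fin 2) F) - 1)
          - (((A : Matrix (Fin 2) (Fin 2) F) - 1) * X + ((A : Matrix (Fin 2) (Fin 2) F) - 1) * X))
        - (((A : Matrix (Fin 2) (Fin 2) F) - 1) * ((A : Matrix (Fin 2) (Fin 2) F) - 1)) * X := by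
    noncomm_ring
  rw [hX, hA] at g
  simp at g
  have g' : (X : Matrix (Fin 2) (Fin 2) F) * (A : Matrix (Fin 2) (Fin 2) F)
      = (A : Matrix (Fin 2) (Fin 2) F) * (A : Matrix (Fin 2) (Fin 2) F) * X :=
    sub_eq_zero.mp g
  simpa [Units.val_mul, pow_two] using g'

/-- The diagonal unit `diag(s,1)`. -/
noncomputable def diagUnit {F : Type} [Field F] (s : F) (hs : s ≠ 0) :
    (Matrix (Fin 2) (Fin 2) F)ˣ :=
  ⟨!![s, 0; 0, 1], !![s⁻¹, 0; 0, 1],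
    by ext i j; fin_cases i <;> fin_cases j <;> simp [Matrix.mul_apply, Fin.sum_univ_two,
      mul_inv_cancel₀ hs],
    by ext i j; fin_cases i <;> fin_cases j <;> simp [Matrix.mul_apply, Fin.sum_univ_two,
      inv_mul_cancel₀ hs]⟩

lemma diagUnit_det {F : Type} [Field F] (s : F) (hs : s ≠ 0) :
    ((diagUnit s hs : (Matrix (Fin 2) (Fin 2) F)ˣ) : Matrix (Fin 2) (Fin 2) F).det = s := by
  simp [diagUnit, Matrix.det_fin_two]

/-- Let `q` be a power of an odd prime and let `H` be the group of pairs
`(A, B) ∈ GL₂(F_q) × GL₂(F_q)` with `det A · det B = 1`. Every unipotent element `(A, B)` of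
`H` (i.e. `(A - I)² = 0 = (B - I)²`) is conjugate in `H` to `(A², B²)`. -/
theorem levi_unipotent_conj_sq
    {F : Type} [Field F] [Fintype F]
    (hq : ∃ p k : ℕ, p.Prime ∧ Odd p ∧ 0 < k ∧ Fintype.card F = p ^ k)
    (A B : Matrix.GeneralLinearGroup (Fin 2) F)
    (hdet : (A : Matrix (Fin 2) (Fin 2) F).det * (B : Matrix (Fin 2) (Fin 2) F).det = 1)
    (hA : ((A : Matrix (Fin 2) (Fin 2) F) - 1) ^ 2 = 0)
    (hB : ((B : Matrix (Fin 2) (Fin 2) F) - 1) ^ 2 = 0) :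
    ∃ X Y : Matrix.GeneralLinearGroup (Fin 2) F,
      (X : Matrix (Fin 2) (Fin 2) F).det * (Y : Matrix (Fin 2) (Fin 2) F).det = 1 ∧
      X * A * X⁻¹ = A ^ 2 ∧ Y * B * Y⁻¹ = B ^ 2 := by
  obtain ⟨p, k, hp, hodd, hk, hcard⟩ := hq
  -- 2 ≠ 0 in F
  have h2 : (2 : F) ≠ 0 := by
    intro h
    have hchar : (ringChar F) ∣ 2 := by
      have : ((2 : ℕ) : F) = 0 := by exact_mod_cast h
      exact (CharP.cast_eq_zero_iff F (ringChar F) 2).mp this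
    have hprime : (ringChar F).Prime := CharP.char_is_prime F (ringChar F)
    have hr2 : ringChar F = 2 := (Nat.prime_dvd_prime_iff_eq hprime Nat.prime_two).mp hchar
    obtain ⟨n, hn, hcard2⟩ := FiniteField.card F (ringChar F)
    rw [hr2] at hcard2
    have hpd : p ∣ 2 ^ (n : ℕ) := by
      have : p ∣ p ^ k := dvd_pow_self p hk.ne'
      rw [← hcard, hcard2] at this
      exact this
    have : p = 2 := (Nat.prime_dvd_prime_iff_eq hp Nat.prime_two).mp
      (hp.dvd_of_dvd_pow (n := (n : ℕ)) (by simpa using hpd))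
    rw [this] at hodd
    exact absurd hodd (by decide)
  rw [pow_two] at hA hB
  have h2' : (2 : F) * (2 : F)⁻¹ = 1 := mul_inv_cancel₀ h2
  by_cases hNA : ((A : Matrix (Fin 2) (Fin 2) F) - 1) = 0 <;>
    by_cases hNB : ((B : Matrix (Fin 2) (Fin 2) F) - 1) = 0
  · -- both trivial
    refine ⟨1, 1, by simp, ?_, ?_⟩
    · exact conj_step A 1 hA (by rw [hNA]; simp)
    · exact conj_step B 1 hB (by rw [hNB]; simp)
  · -- A trivial, B not
    obtain ⟨Y, hYc, hYd⟩ := key_conj h2 _ hB hNB 1 one_ne_zero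
    refine ⟨diagUnit (2:F)⁻¹ (inv_ne_zero h2), Y, ?_, ?_, conj_step B Y hB hYc⟩
    · rw [diagUnit_det, hYd]
      field_simp
    · exact conj_step A _ hA (by rw [hNA]; simp)
  · -- B trivial, A not
    obtain ⟨X, hXc, hXd⟩ := key_conj h2 _ hA hNA 1 one_ne_zero
    refine ⟨X, diagUnit (2:F)⁻¹ (inv_ne_zero h2), ?_, conj_step A X hA hXc, ?_⟩
    · rw [diagUnit_det, hXd]
      field_simp
    · exact conj_step B _ hB (by rw [hNB]; simp)
  · -- both nontrivial
    obtain ⟨X, hXc, hXd⟩ := key_conj h2 _ hA hNA 1 one_ne_zero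
    obtain ⟨Y, hYc, hYd⟩ := key_conj h2 _ hB hNB (2:F)⁻¹ (inv_ne_zero h2)
    refine ⟨X, Y, ?_, conj_step A X hA hXc, conj_step B Y hB hYc⟩
    rw [hXd, hYd]
    field_simp
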